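/- For all Schwartz functions f, g : ℂ → ℂ one has ∫_ℂ Zf(z) · conj(g(z)) dz = − ∫_ℂ f(z) · conj(Z̄g(z)) dz; that is, the adjoint of Z (on Schwartz functions, with respect to the L²(ℂ) inner product) is −Z̄. -/

import Mathlib

open MeasureTheory Complex
open scoped ENNReal NNReal
noncomputable section

/-- ∂/∂x -/
def pdx (f : ℂ → ℂ) (z : ℂ) : ℂ := fderiv ℝ f z 1
/-- ∂/∂y -/
def pdy (f : ℂ → ℂ) (z : ℂ) : ℂ := fderiv ℝ f z Complex.I
/-- ∂/∂z := ∂/∂x − i ∂/∂y -/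
def pdz (f : ℂ → ℂ) (z : ℂ) : ℂ := pdx f z - Complex.I * pdy f z
/-- ∂/∂z̄ := ∂/∂x + i ∂/∂y -/
def pdzbar (f : ℂ → ℂ) (z : ℂ) : ℂ := pdx f z + Complex.I * pdy f z
/-- Zf(z) = ∂f/∂z + (1/2) z̄ f(z) -/
def Zop (f : ℂ → ℂ) (z : ℂ) : ℂ := pdz f z + (1/2 : ℂ) * (starRingEnd ℂ) z * f z
/-- Z̄f(z) = ∂f/∂z̄ − (1/2) z f(z) -/
def Zbarop (f : ℂ → ℂ) (z : ℂ) : ℂ := pdzbar f z - (1/2 : ℂ) * z * f z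

/-- normalized Hermite functions -/
def hermiteFn (k : ℕ) (x : ℝ) : ℝ :=
  ((2:ℝ)^k * Real.sqrt Real.pi * (Nat.factorial k : ℝ)) ^ (-(1/2 : ℝ)) * (-1:ℝ)^k *
    Real.exp (x^2/2) * iteratedDeriv k (fun t => Real.exp (-t^2)) x

/-- special Hermite functions φ_{m,n} -/
def sphi (m n : ℕ) (z : ℂ) : ℂ :=
  (((2 * Real.pi) ^ (-(1/2:ℝ)) : ℝ) : ℂ) *
    ∫ ξ : ℝ, Complex.exp (Complex.I * ξ * z.re) *
      (hermiteFn m (ξ + z.im/2) : ℂ) * (hermiteFn n (ξ - z.im/2) : ℂ)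

/-- special Hermite operator L -/
def Lop (f : ℂ → ℂ) (z : ℂ) : ℂ :=
  -(pdx (pdx f) z + pdy (pdy f) z) + (1/4 : ℂ) * ((‖z‖^2 : ℝ) : ℂ) * f z
    - Complex.I * ((z.re : ℂ) * pdy f z - (z.im : ℂ) * pdx f z)

/-- Gaussian integer associated to k ∈ ℤ² -/
def gint (k : ℤ × ℤ) : ℂ := (k.1 : ℂ) + (k.2 : ℂ) * Complex.I

/-- twisted translation -/
def Tt (m n : ℤ) (f : ℂ → ℂ) (z : ℂ) : ℂ :=
  Complex.exp (2 * Real.pi * Complex.I * ((n : ℂ) * z.re - (m : ℂ) * z.im)) *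
    f (z - ((m : ℂ) + (n : ℂ) * Complex.I))

/-- twisted Zak transform -/
def Zak (f : ℂ → ℂ) (z w : ℂ) : ℂ :=
  ∑' k : ℤ × ℤ, f (z - gint k) *
    Complex.exp (2 * Real.pi * Complex.I * (((w * (starRingEnd ℂ) (gint k)).im : ℝ) : ℂ))

/-- the cell k + [0,1]² -/
def cell (k : ℤ × ℤ) : Set ℂ :=
  {z : ℂ | z.re ∈ Set.Icc (k.1 : ℝ) (k.1 + 1) ∧ z.im ∈ Set.Icc (k.2 : ℝ) (k.2 + 1)}

/-- amalgam local sup norm -/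
def amalgamNorm (f : ℂ → ℂ) (k : ℤ × ℤ) : ℝ := sSup ((fun z => ‖f z‖) '' cell k)

/-- unit square Q = [0,1) × [0,1) -/
def Qset : Set ℂ := {z : ℂ | z.re ∈ Set.Ico (0:ℝ) 1 ∧ z.im ∈ Set.Ico (0:ℝ) 1}

/-- frame condition with bounds A, B on a sub-collection S of twisted translates of g -/
def IsTwistedFrameOn (g : ℂ → ℂ) (S : Set (ℤ × ℤ)) (A B : ℝ) : Prop :=
  ∀ f : ℂ → ℂ, MemLp f 2 (volume : Measure ℂ) →
    A * ∫ z : ℂ, ‖f z‖^2 ≤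
        (∑' k : S, ‖∫ z : ℂ, f z * (starRingEnd ℂ) (Tt (k : ℤ × ℤ).1 (k : ℤ × ℤ).2 g z)‖^2) ∧
    (∑' k : S, ‖∫ z : ℂ, f z * (starRingEnd ℂ) (Tt (k : ℤ × ℤ).1 (k : ℤ × ℤ).2 g z)‖^2) ≤
        B * ∫ z : ℂ, ‖f z‖^2

/-- the twisted Gabor system of g is a frame for L²(ℂ) -/
def IsTwistedFrame (g : ℂ → ℂ) : Prop :=
  ∃ A B : ℝ, 0 < A ∧ 0 < B ∧ IsTwistedFrameOn g Set.univ A B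

/-- exact frame: a frame that ceases to be a frame upon deletion of any single element -/
def IsExactTwistedFrame (g : ℂ → ℂ) : Prop :=
  IsTwistedFrame g ∧
    ∀ k₀ : ℤ × ℤ, ¬ ∃ A B : ℝ, 0 < A ∧ 0 < B ∧ IsTwistedFrameOn g ({k₀}ᶜ) A B



section Aux

open SchwartzMap

/-- multiplication-with-conjugate bilinear form : (a,b) ↦ a * conj b -/
def mulConjB : ℂ →L[ℝ] ℂ →L[ℝ] ℂ :=
  ((ContinuousLinearMap.mul ℝ ℂ).flip.comp Complex.conjCLE.toContinuousLinearMap).flip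

lemma mulConjB_apply (a b : ℂ) : mulConjB a b = a * (starRingEnd ℂ) b := rfl

lemma schwartz_hasTemperateGrowth (g : SchwartzMap ℂ ℂ) :
    Function.HasTemperateGrowth ⇑g := by
  refine ⟨g.smooth ⊤, fun n => ⟨0, SchwartzMap.seminorm ℝ 0 n g, fun x => ?_⟩⟩
  simpa using g.norm_iteratedFDeriv_le_seminorm ℝ n x

/-- the Schwartz map z ↦ u z * conj (w z) -/
def mulConjS (u w : SchwartzMap ℂ ℂ) : SchwartzMap ℂ ℂ :=
  SchwartzMap.bilinLeftCLM mulConjB (schwartz_hasTemperateGrowth w) u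

lemma mulConjS_apply (u w : SchwartzMap ℂ ℂ) (z : ℂ) :
    mulConjS u w z = u z * (starRingEnd ℂ) (w z) := rfl

/-- the Schwartz map z ↦ u z * conj z -/
def mulConjIdS (u : SchwartzMap ℂ ℂ) : SchwartzMap ℂ ℂ :=
  SchwartzMap.bilinLeftCLM mulConjB
    ((ContinuousLinearMap.id ℝ ℂ).hasTemperateGrowth) u

lemma mulConjIdS_apply (u : SchwartzMap ℂ ℂ) (z : ℂ) :
    mulConjIdS u z = u z * (starRingEnd ℂ) z := rfl

lemma ibp (f g : SchwartzMap ℂ ℂ) (v : ℂ) :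
    ∫ z : ℂ, mulConjS f (LineDeriv.lineDerivOpCLM ℝ (SchwartzMap ℂ ℂ) v g) z
      = - ∫ z : ℂ, mulConjS (LineDeriv.lineDerivOpCLM ℝ (SchwartzMap ℂ ℂ) v f) g z := by
  have h := integral_bilinear_fderiv_right_eq_neg_left_of_integrable
    (μ := (volume : Measure ℂ)) (B := mulConjB) (f := ⇑f) (g := ⇑g) (v := v)
    ((mulConjS (LineDeriv.lineDerivOpCLM ℝ (SchwartzMap ℂ ℂ) v f) g).integrable (μ := volume))
    ((mulConjS f (LineDeriv.lineDerivOpCLM ℝ (SchwartzMap ℂ ℂ) v g)).integrable (μ := volume))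
    ((mulConjS f g).integrable (μ := volume))
    (fun x _ => f.differentiableAt) (fun x _ => g.differentiableAt)
  exact h

end Aux

-- STATEMENT 5
theorem stmt5 (f g : SchwartzMap ℂ ℂ) :
    ∫ z : ℂ, Zop (⇑f) z * (starRingEnd ℂ) (g z)
      = - ∫ z : ℂ, f z * (starRingEnd ℂ) (Zbarop (⇑g) z) := by
  have hx1 := ibp f g 1
  have hxI := ibp f g Complex.I
  set fx := LineDeriv.lineDerivOpCLM ℝ (SchwartzMap ℂ ℂ) (1:ℂ) f
  set fy := LineDeriv.lineDerivOpCLM ℝ (SchwartzMap ℂ ℂ) Complex.I f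
  set gx := LineDeriv.lineDerivOpCLM ℝ (SchwartzMap ℂ ℂ) (1:ℂ) g
  set gy := LineDeriv.lineDerivOpCLM ℝ (SchwartzMap ℂ ℂ) Complex.I g
  set h := mulConjS f g
  have hL : (fun z : ℂ => Zop (⇑f) z * (starRingEnd ℂ) (g z)) =
      fun z : ℂ => mulConjS fx g z + (-Complex.I) * mulConjS fy g z
        + (1/2 : ℂ) * mulConjIdS h z := by
    funext z
    simp only [mulConjS_apply, mulConjIdS_apply, Zop, pdz, pdx, pdy,
      LineDeriv.lineDerivOpCLM_apply, SchwartzMap.lineDerivOp_apply_eq_fderiv, fx, fy, h]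
    ring
  have hR : (fun z : ℂ => f z * (starRingEnd ℂ) (Zbarop (⇑g) z)) =
      fun z : ℂ => mulConjS f gx z + (-Complex.I) * mulConjS f gy z
        + (-(1/2 : ℂ)) * mulConjIdS h z := by
    funext z
    simp only [mulConjS_apply, mulConjIdS_apply, Zbarop, pdzbar, pdx, pdy,
      LineDeriv.lineDerivOpCLM_apply, SchwartzMap.lineDerivOp_apply_eq_fderiv, gx, gy, h, map_add, map_sub, map_mul,
      Complex.conj_I, map_div₀, map_one, map_ofNat]
    ring
  rw [hL, hR]
  have iS1 := (mulConjS fx g).integrable (μ := (volume : Measure ℂ))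
  have iS2 := (mulConjS fy g).integrable (μ := (volume : Measure ℂ))
  have iS3 := (mulConjIdS h).integrable (μ := (volume : Measure ℂ))
  have iS4 := (mulConjS f gx).integrable (μ := (volume : Measure ℂ))
  have iS5 := (mulConjS f gy).integrable (μ := (volume : Measure ℂ))
  have iS2' : Integrable (fun z : ℂ => (-Complex.I) * mulConjS fy g z) volume :=
    iS2.const_mul _
  have iS5' : Integrable (fun z : ℂ => (-Complex.I) * mulConjS f gy z) volume :=
    iS5.const_mul _
  have iS3' : Integrable (fun z : ℂ => (1/2 : ℂ) * mulConjIdS h z) volume :=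
    iS3.const_mul _
  have iS3'' : Integrable (fun z : ℂ => (-(1/2) : ℂ) * mulConjIdS h z) volume :=
    iS3.const_mul _
  have iS12 : Integrable (fun z : ℂ => mulConjS fx g z + (-Complex.I) * mulConjS fy g z)
      volume := iS1.add iS2'
  have iS45 : Integrable (fun z : ℂ => mulConjS f gx z + (-Complex.I) * mulConjS f gy z)
      volume := iS4.add iS5'
  rw [integral_add iS12 iS3', integral_add iS1 iS2',
    integral_add iS45 iS3'', integral_add iS4 iS5',
    MeasureTheory.integral_const_mul, MeasureTheory.integral_const_mul, MeasureTheory.integral_const_mul, MeasureTheory.integral_const_mul,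
    hx1, hxI]
  ring
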